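/- Define the iterates Y_n(x) for the step set {NE, SE, NW} by Y_0(x) = x and Y_{n+1}(x) = Y_1(Y_n(x)). Then for all n ≥ 2, 1/Y_n(x) = 1/(t·Y_{n-1}(x)) - 1/Y_{n-2}(x). -/

import Mathlib

open PowerSeries

/-- The field `K = ℚ((t))` of formal Laurent series in `t`. -/
abbrev K := LaurentSeries ℚ

/-- The element `t` of `ℚ((t))`. -/
noncomputable def tt : K := HahnSeries.single 1 1

/-- Composition (substitution) of formal power series in `x` over a commutative
ring; the standard formula when the inner series has zero constant term. -/
noncomputable def pscomp {R : Type*} [CommRing R] (f g : PowerSeries R) : PowerSeries R :=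
  PowerSeries.mk fun n =>
    ∑ k ∈ Finset.range (n + 1), PowerSeries.coeff k f * PowerSeries.coeff n (g ^ k)

/-- The embedding of `ℚ((t))⟦x⟧` into the field `ℚ((t))((x))` of Laurent series
in `x`, in which the reciprocals `1/Yₙ` are taken. -/
noncomputable def ofPS : PowerSeries K →+* LaurentSeries K :=
  HahnSeries.ofPowerSeries ℤ K

section pscompLemmas

open Finset

variable {R : Type*} [CommRing R] {g : PowerSeries R}

lemma coeff_pow_eq_zero (hg : constantCoeff g = 0) {p k : ℕ} (h : p < k) :
    coeff p (g ^ k) = 0 :=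
  X_pow_dvd_iff.1 (pow_dvd_pow_of_dvd (X_dvd_iff.2 hg) k) p h

lemma coeff_aeval (hg : constantCoeff g = 0) (P : Polynomial R) (n : ℕ) :
    coeff n (Polynomial.aeval g P) =
      ∑ k ∈ Finset.range (n + 1), P.coeff k * coeff n (g ^ k) := by
  rw [Polynomial.aeval_eq_sum_range' (lt_add_one P.natDegree), map_sum]
  simp_rw [map_smul, smul_eq_mul]
  set N := max (n + 1) (P.natDegree + 1) with hN
  rw [show ∑ k ∈ range (P.natDegree + 1), P.coeff k * coeff n (g ^ k)
      = ∑ k ∈ range N, P.coeff k * coeff n (g ^ k) from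
    Finset.sum_subset (Finset.range_subset_range.2 (le_max_right _ _)) (fun k _ hk => by
      rw [Polynomial.coeff_eq_zero_of_natDegree_lt (by simpa using hk), zero_mul])]
  exact (Finset.sum_subset (Finset.range_subset_range.2 (le_max_left _ _)) (fun k _ hk => by
      rw [coeff_pow_eq_zero hg (by simpa using hk), mul_zero])).symm

lemma coeff_pscomp_eq (hg : constantCoeff g = 0) (f : PowerSeries R) {p m : ℕ} (hpm : p < m) :
    coeff p (pscomp f g) = coeff p (Polynomial.aeval g (trunc m f)) := by
  rw [coeff_aeval hg, pscomp, coeff_mk]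
  apply Finset.sum_congr rfl
  intro k hk
  rw [coeff_trunc, if_pos (lt_of_lt_of_le (Finset.mem_range.1 hk) hpm)]

lemma pscomp_mul (hg : constantCoeff g = 0) (f h : PowerSeries R) :
    pscomp (f * h) g = pscomp f g * pscomp h g := by
  ext n
  rw [coeff_pscomp_eq hg (f * h) (lt_add_one n), coeff_aeval hg]
  have htr : ∀ k ∈ range (n + 1),
      (trunc (n+1) (f * h)).coeff k * coeff n (g ^ k)
      = (trunc (n+1) f * trunc (n+1) h).coeff k * coeff n (g ^ k) := by
    intro k hk
    have hk' : k < n + 1 := Finset.mem_range.1 hk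
    congr 1
    rw [coeff_trunc, if_pos hk',
      PowerSeries.coeff_mul_eq_coeff_trunc_mul_trunc f h hk', ← Polynomial.coeff_coe,
      Polynomial.coe_mul]
  rw [Finset.sum_congr rfl htr, ← coeff_aeval hg, map_mul, coeff_mul, coeff_mul]
  apply Finset.sum_congr rfl
  intro pq hpq
  have h1 : pq.1 < n + 1 := by
    have := Finset.HasAntidiagonal.antidiagonal.fst_le hpq; omega
  have h2 : pq.2 < n + 1 := by
    have := Finset.HasAntidiagonal.antidiagonal.snd_le hpq; omega
  rw [coeff_pscomp_eq hg f h1, coeff_pscomp_eq hg h h2]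

lemma pscomp_one : pscomp (1 : PowerSeries R) g = 1 := by
  ext n
  rw [pscomp, coeff_mk]
  simp [PowerSeries.coeff_one]

lemma pscomp_add (f h : PowerSeries R) : pscomp (f + h) g = pscomp f g + pscomp h g := by
  ext n
  simp [pscomp, add_mul, Finset.sum_add_distrib]

lemma pscomp_X (hg : constantCoeff g = 0) : pscomp X g = g := by
  ext n
  rw [pscomp, coeff_mk]
  rcases n with _ | n
  · simp [PowerSeries.coeff_X, coeff_zero_eq_constantCoeff, hg]
  · rw [Finset.sum_eq_single 1]
    · simp
    · intro k _ hk
      simp [PowerSeries.coeff_X, hk]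
    · intro hmem
      simp at hmem

lemma pscomp_zero : pscomp (0 : PowerSeries R) g = 0 := by
  ext n; simp [pscomp]

lemma pscomp_C (a : R) : pscomp (PowerSeries.C a) g = PowerSeries.C a := by
  ext n
  rw [pscomp, coeff_mk, Finset.sum_eq_single 0]
  · rcases eq_or_ne n 0 with rfl | hn
    · simp
    · simp [PowerSeries.coeff_C, PowerSeries.coeff_one, hn]
  · intro k _ hk
    simp [PowerSeries.coeff_C, hk]
  · intro hmem
    simp at hmem

/-- Composition with a fixed constant-term-zero series, as a ring hom. -/
noncomputable def compHom (hg : constantCoeff g = 0) : PowerSeries R →+* PowerSeries R where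
  toFun f := pscomp f g
  map_one' := pscomp_one
  map_mul' := pscomp_mul hg
  map_zero' := pscomp_zero
  map_add' := pscomp_add

lemma compHom_apply (hg : constantCoeff g = 0) (f : PowerSeries R) :
    compHom hg f = pscomp f g := rfl

lemma coeff_one_pscomp (f : PowerSeries R) :
    coeff 1 (pscomp f g) = coeff 1 f * coeff 1 g := by
  rw [pscomp, coeff_mk]
  simp [Finset.sum_range_succ, PowerSeries.coeff_one]

lemma constantCoeff_pscomp (f : PowerSeries R) :
    constantCoeff (pscomp f g) = constantCoeff f := by
  rw [← coeff_zero_eq_constantCoeff_apply, pscomp, coeff_mk]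
  simp

lemma field_helper {F : Type*} [Field F] {A B C : F} (hB : B ≠ 0) (hC : C ≠ 0)
    (h : A * B = C * (A + B)) : A⁻¹ = C⁻¹ - B⁻¹ := by
  have i1 : C * C⁻¹ = 1 := mul_inv_cancel₀ hC
  have i2 : B * B⁻¹ = 1 := mul_inv_cancel₀ hB
  have final : A * (C⁻¹ - B⁻¹) = 1 := by
    have h2 : B * (C * (A * (C⁻¹ - B⁻¹))) = B * (C * 1) := by
      linear_combination A * B * i1 - C * A * i2 + h
    have h3 := mul_left_cancel₀ hB h2
    exact mul_left_cancel₀ hC h3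
  exact inv_eq_of_mul_eq_one_right final

lemma mul_cancel_left' {R : Type*} [CommRing R] [NoZeroDivisors R] {u v w : R}
    (hu : u ≠ 0) (h : u * v = u * w) : v = w := by
  have h2 : u * (v - w) = 0 := by linear_combination h
  rcases mul_eq_zero.mp h2 with h3 | h3
  · exact absurd h3 hu
  · exact sub_eq_zero.mp h3

end pscompLemmas

lemma tt_ne_zero : tt ≠ 0 := HahnSeries.single_ne_zero one_ne_zero

lemma tt_sq : tt ^ 2 = HahnSeries.single (2:ℤ) (1:ℚ) := by
  rw [pow_two, tt, HahnSeries.single_mul_single]; norm_num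

lemma fourNeZeroK : (4:K) ≠ 0 := by
  intro h
  have h2 := congrArg (fun f : K => f.coeff 0) h
  rw [show (4:K) = 1+1+1+1 by norm_num] at h2
  simp [HahnSeries.coeff_add] at h2
  norm_num at h2

lemma twoNeZeroK : (2:K) ≠ 0 := by
  intro h
  have h2 := congrArg (fun f : K => f.coeff 0) h
  rw [show (2:K) = 1+1 by norm_num] at h2
  simp [HahnSeries.coeff_add] at h2

lemma four_tt_sq_ne_one : 4 * tt ^ 2 ≠ 1 := by
  intro h
  have h0 := congrArg (fun f : K => f.coeff 0) h
  have h4 : (4 : K) * tt ^ 2 = tt ^ 2 + tt ^ 2 + tt ^ 2 + tt ^ 2 := by ring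
  rw [h4] at h0
  simp [tt_sq, HahnSeries.coeff_single] at h0

/-- For the step set `{NE, SE, NW}`, define the iterates
`Y₀(x) = x` and `Y_{n+1}(x) = Y₁(Yₙ(x))`, where
`Y₁ = (x/(2t(1+x²)))(1 - √(1-4t²(1+x²)))` is the kernel root (characterized by
`2t(1+x²)·Y₁ = x(1-s)`, `s² = 1-4t²(1+x²)`).  Then for all `n ≥ 2`,
`1/Yₙ(x) = 1/(t·Y_{n-1}(x)) - 1/Y_{n-2}(x)`. -/
theorem iterated_kernel_root_recurrence
    (s Y1 : PowerSeries K)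
    (hs : s ^ 2 = 1 - 4 * PowerSeries.C (tt ^ 2) * (1 + PowerSeries.X ^ 2))
    (hY1 : 2 * PowerSeries.C tt * (1 + PowerSeries.X ^ 2) * Y1
        = PowerSeries.X * (1 - s))
    (Yit : ℕ → PowerSeries K)
    (hY0 : Yit 0 = PowerSeries.X)
    (hrec : ∀ n, Yit (n + 1) = pscomp Y1 (Yit n)) :
    ∀ n, 2 ≤ n →
      (ofPS (Yit n))⁻¹ =
        (ofPS (PowerSeries.C tt * Yit (n - 1)))⁻¹ - (ofPS (Yit (n - 2)))⁻¹ := by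
  rw [show PowerSeries.C (tt ^ 2) = (PowerSeries.C tt) ^ 2 from map_pow _ _ _] at hs
  have h4tt : (4 : K) * tt ≠ 0 := mul_ne_zero fourNeZeroK tt_ne_zero
  have hCtt : (PowerSeries.C tt) ≠ 0 := fun h =>
    tt_ne_zero (by simpa using congrArg (constantCoeff) h)
  have h4ps : (4 : PowerSeries K) ≠ 0 := fun h =>
    fourNeZeroK (by simpa [map_ofNat] using congrArg (constantCoeff) h)
  have h1X2 : (1 + PowerSeries.X ^ 2 : PowerSeries K) ≠ 0 := fun h =>
    one_ne_zero (α := K) (by simpa using congrArg (constantCoeff) h)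
  have hcancel : (4 * PowerSeries.C tt * (1 + PowerSeries.X ^ 2) : PowerSeries K) ≠ 0 :=
    mul_ne_zero (mul_ne_zero h4ps hCtt) h1X2
  have hquad : PowerSeries.C tt * (1 + PowerSeries.X ^ 2) * Y1 ^ 2
      = PowerSeries.X * Y1 - PowerSeries.C tt * PowerSeries.X ^ 2 := by
    apply mul_cancel_left' hcancel
    linear_combination (2 * PowerSeries.C tt * (1 + PowerSeries.X ^ 2) * Y1
      + PowerSeries.X * (1 - s) - 2 * PowerSeries.X) * hY1 + PowerSeries.X ^ 2 * hs
  -- constant coefficient of Y1 vanishes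
  have hY1c0 : constantCoeff Y1 = 0 := by
    have h0 := congrArg (constantCoeff) hY1
    simp [map_mul, map_ofNat] at h0
    rcases h0 with (h | h) | h
    · exact absurd h twoNeZeroK
    · exact absurd h tt_ne_zero
    · exact h
  -- the coefficient of x in Y1
  have lhs1 : (coeff 1) (2 * PowerSeries.C tt * (1 + PowerSeries.X ^ 2) * Y1)
      = 2 * tt * (coeff 1 Y1) := by
    have e : 2 * PowerSeries.C tt * (1 + PowerSeries.X ^ 2) * Y1
        = PowerSeries.C tt * Y1 + PowerSeries.C tt * Y1
          + ((PowerSeries.C tt * Y1) * PowerSeries.X ^ 2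
            + (PowerSeries.C tt * Y1) * PowerSeries.X ^ 2) := by ring
    rw [e]
    simp [PowerSeries.coeff_mul_X_pow', PowerSeries.coeff_C_mul]
    ring
  have rhs1 : (coeff 1) (PowerSeries.X * (1 - s)) = 1 - constantCoeff s := by
    rw [PowerSeries.coeff_succ_X_mul]
    simp
  have h1 : 2 * tt * (coeff 1 Y1) = 1 - constantCoeff s := by
    rw [← lhs1, ← rhs1, hY1]
  have h2 : (constantCoeff s) ^ 2 = 1 - 4 * tt ^ 2 := by
    have h0 := congrArg (constantCoeff) hs
    simpa [map_pow, map_ofNat] using h0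
  set a := coeff 1 Y1 with ha_def
  have ha : tt * a ^ 2 - a + tt = 0 := by
    apply mul_cancel_left' h4tt
    rw [mul_zero]
    linear_combination (2 * tt * a + (1 - constantCoeff s) - 2) * h1 + h2
  have han : a ≠ 0 := by
    intro h
    exact tt_ne_zero (by linear_combination ha - (tt * a - 1) * h)
  have ha1 : a ^ 2 ≠ 1 := by
    intro h
    have h2a : a = 2 * tt := by linear_combination tt * h - ha
    rw [h2a] at h
    exact four_tt_sq_ne_one (by linear_combination h)
  -- facts about the iterates
  have hc1 : ∀ n, coeff 1 (Yit n) = a ^ n := by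
    intro n
    induction n with
    | zero => simp [hY0]
    | succ n ih => rw [hrec, coeff_one_pscomp, ih]; ring
  have hcc : ∀ n, constantCoeff (Yit n) = 0 := by
    intro n
    cases n with
    | zero => simp [hY0]
    | succ n => rw [hrec, constantCoeff_pscomp]; exact hY1c0
  have hne : ∀ n, Yit n ≠ 0 := by
    intro n h
    have h' := hc1 n
    rw [h, map_zero] at h'
    exact pow_ne_zero n han h'.symm
  have hinj : Function.Injective ofPS := HahnSeries.ofPowerSeries_injective
  -- main computation
  intro n hn
  obtain ⟨m, rfl⟩ : ∃ m, n = m + 2 := ⟨n - 2, by omega⟩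
  simp only [show m + 2 - 1 = m + 1 from rfl, show m + 2 - 2 = m from rfl]
  have hccZ : constantCoeff (Yit (m+1)) = 0 := hcc (m+1)
  have hccV : constantCoeff (Yit m) = 0 := hcc m
  -- quadratic relation for (Z, W)
  have q1 : PowerSeries.C tt * (1 + (Yit (m+1)) ^ 2) * (Yit (m+2)) ^ 2
      = Yit (m+1) * Yit (m+2) - PowerSeries.C tt * (Yit (m+1)) ^ 2 := by
    have key := congrArg (compHom hccZ) hquad
    simp only [map_mul, map_add, map_sub, map_pow, map_one, compHom_apply,
      pscomp_X hccZ, pscomp_C] at key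
    rw [← hrec (m+1)] at key
    exact key
  -- quadratic relation for (V, Z), symmetrized to (Z, V)
  have q2 : PowerSeries.C tt * (1 + (Yit m) ^ 2) * (Yit (m+1)) ^ 2
      = Yit m * Yit (m+1) - PowerSeries.C tt * (Yit m) ^ 2 := by
    have key := congrArg (compHom hccV) hquad
    simp only [map_mul, map_add, map_sub, map_pow, map_one, compHom_apply,
      pscomp_X hccV, pscomp_C] at key
    rw [← hrec m] at key
    exact key
  have q2' : PowerSeries.C tt * (1 + (Yit (m+1)) ^ 2) * (Yit m) ^ 2
      = Yit (m+1) * Yit m - PowerSeries.C tt * (Yit (m+1)) ^ 2 := by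
    linear_combination q2
  -- pass to the Laurent series field
  set A : LaurentSeries K := ofPS (Yit (m+2)) with hA_def
  set B : LaurentSeries K := ofPS (Yit m) with hB_def
  set z : LaurentSeries K := ofPS (Yit (m+1)) with hz_def
  set τ : LaurentSeries K := ofPS (PowerSeries.C tt) with hτ_def
  have Q1 : τ * (1 + z ^ 2) * A ^ 2 = z * A - τ * z ^ 2 := by
    have := congrArg ofPS q1
    simpa only [map_mul, map_add, map_sub, map_pow, map_one] using this
  have Q2 : τ * (1 + z ^ 2) * B ^ 2 = z * B - τ * z ^ 2 := by
    have := congrArg ofPS q2'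
    simpa only [map_mul, map_add, map_sub, map_pow, map_one] using this
  have hA0 : A ≠ 0 := fun h => hne (m+2) (hinj (by rw [← map_zero ofPS] at h; exact h))
  have hB0 : B ≠ 0 := fun h => hne m (hinj (by rw [← map_zero ofPS] at h; exact h))
  have hz0 : z ≠ 0 := fun h => hne (m+1) (hinj (by rw [← map_zero ofPS] at h; exact h))
  have hτ0 : τ ≠ 0 := fun h => hCtt (hinj (by rw [← map_zero ofPS] at h; exact h))
  have h1z : (1 + z ^ 2 : LaurentSeries K) ≠ 0 := by
    intro h
    have e : ofPS (1 + (Yit (m+1)) ^ 2) = 0 := by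
      simpa only [map_add, map_pow, map_one] using h
    have e2 : (1 + (Yit (m+1)) ^ 2 : PowerSeries K) = 0 := hinj (by rw [e, map_zero])
    have := congrArg (constantCoeff) e2
    simp [hccZ] at this
  have hAB : A ≠ B := by
    intro h
    have hWV : Yit (m+2) = Yit m := hinj h
    have e := hc1 (m+2)
    rw [hWV, hc1 m] at e
    have e2 : a ^ m * a ^ 2 = a ^ m * 1 := by
      rw [mul_one, ← pow_add]; exact e.symm
    exact ha1 (mul_cancel_left' (pow_ne_zero m han) e2)
  have hABne : A - B ≠ 0 := sub_ne_zero.2 hAB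
  have hsum : τ * (1 + z ^ 2) * (A + B) = z := by
    apply mul_cancel_left' hABne
    linear_combination Q1 - Q2
  have hprod : (1 + z ^ 2) * (A * B) = z ^ 2 := by
    apply mul_cancel_left' hτ0
    apply mul_cancel_left' hABne
    linear_combination B * Q1 - A * Q2
  have hkey : A * B = τ * z * (A + B) := by
    apply mul_cancel_left' h1z
    linear_combination hprod - z * hsum
  rw [show ofPS (PowerSeries.C tt * Yit (m+1)) = τ * z from map_mul _ _ _]
  have hτz : τ * z ≠ 0 := mul_ne_zero hτ0 hz0
  exact field_helper hB0 hτz hkey
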